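/- Let μ be a uniformly locally bounded signed Borel measure on ℝ, E ∈ ℝ, and let (u,v) be a solution of −u'' + uμ = Eu such that u ∈ L²(ℝ), v ∈ L²(ℝ) (i.e. u belongs to W¹₂(ℝ)). Then u(x) → 0 and v(x) → 0 as |x| → ∞. -/

import Mathlib

open MeasureTheory Filter Set Real
open scoped ENNReal

/-- A locally finite signed Borel measure on `ℝ`, represented as a formal
difference `pos - neg` of two nonnegative Borel measures. -/
structure SM where
  pos : Measure ℝ
  neg : Measure ℝ

/-- Local finiteness of both parts (i.e. the signed measure has locally finite
total variation). -/
def SM.LocFin (μ : SM) : Prop :=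
  IsLocallyFiniteMeasure μ.pos ∧ IsLocallyFiniteMeasure μ.neg

/-- The total variation `|a - b|` of the formal difference of two measures,
using the lattice-theoretic subtraction of measures (Jordan decomposition). -/
noncomputable def tvSub (a b : Measure ℝ) : Measure ℝ := (a - b) + (b - a)

/-- The total variation measure `|μ|` of a signed measure. -/
noncomputable def SM.tv (μ : SM) : Measure ℝ := tvSub μ.pos μ.neg

/-- The total variation `|μ₁ - μ₂|` of the difference of two signed measures. -/
noncomputable def tvDiff (μ₁ μ₂ : SM) : Measure ℝ :=
  tvSub (μ₁.pos + μ₂.neg) (μ₂.pos + μ₁.neg)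

/-- `‖ν‖_loc = sup_x ν([x, x+1])`. -/
noncomputable def normLoc (ν : Measure ℝ) : ℝ≥0∞ := ⨆ x : ℝ, ν (Set.Icc x (x + 1))

/-- A measure is uniformly locally bounded if `sup_x ν([x,x+1]) < ∞`. -/
def UnifLocBounded (ν : Measure ℝ) : Prop := normLoc ν < ⊤

/-- `μ` is `p`-periodic: `μ(· + p) = μ`. -/
def SM.IsPeriodic (μ : SM) (p : ℝ) : Prop :=
  Measure.map (fun x => x + p) μ.pos = μ.pos ∧ Measure.map (fun x => x + p) μ.neg = μ.neg

/-- `I_x = [min(x,0), max(x,0)]`. -/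
def Ix (x : ℝ) : Set ℝ := Set.Icc (min x 0) (max x 0)

/-- The integral `∫_A f dμ` of `f` over `A` against the signed measure `μ`. -/
noncomputable def SM.integOn (μ : SM) (f : ℝ → ℝ) (A : Set ℝ) : ℝ :=
  (∫ t in A, f t ∂μ.pos) - (∫ t in A, f t ∂μ.neg)

/-- `∫_0^x f dμ := ∫_{[0,x]} f dμ` for `x ≥ 0` and `:= -∫_{(x,0)} f dμ` for `x < 0`. -/
noncomputable def intRight (μ : SM) (f : ℝ → ℝ) (x : ℝ) : ℝ :=
  if 0 ≤ x then μ.integOn f (Set.Icc 0 x) else - μ.integOn f (Set.Ioo x 0)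

/-- `(u, v)` is a solution of `-u'' + u μ = E u`: `u` is locally absolutely
continuous with `u(x) = u(0) + ∫_0^x v`, and
`v(x) = v(0) + ∫_0^x u dμ - E ∫_0^x u` (`v` is the right limit `u'(·+)`). -/
structure IsSolution (μ : SM) (E : ℝ) (u v : ℝ → ℝ) : Prop where
  locInt : LocallyIntegrable v volume
  u_eq : ∀ x : ℝ, u x = u 0 + ∫ t in (0:ℝ)..x, v t
  v_eq : ∀ x : ℝ, v x = v 0 + intRight μ u x - E * ∫ t in (0:ℝ)..x, u t

/-- The total variation measure `|μ - E λ|`, `λ` Lebesgue measure. -/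
noncomputable def tvWithE (μ : SM) (E : ℝ) : Measure ℝ :=
  tvSub (μ.pos + ENNReal.ofReal (-E) • volume) (μ.neg + ENNReal.ofReal E • volume)

/-- Membership in the Sobolev space `W¹₂(ℝ)` (continuous representative `u`
with derivative `d`): `u, d ∈ L²` and `u(x) = u(0) + ∫_0^x d`. -/
def IsW12 (u d : ℝ → ℝ) : Prop :=
  MemLp u 2 volume ∧ MemLp d 2 volume ∧ ∀ x : ℝ, u x = u 0 + ∫ t in (0:ℝ)..x, d t

/-- Addition of signed measures. -/
noncomputable def SM.add (a b : SM) : SM := ⟨a.pos + b.pos, a.neg + b.neg⟩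

/-- The translate `T_x μ = μ(· - x)`. -/
noncomputable def SM.translate (μ : SM) (x : ℝ) : SM :=
  ⟨Measure.map (fun y => y + x) μ.pos, Measure.map (fun y => y + x) μ.neg⟩

/-- The scaled measure `μ ∘ β`, `(μ ∘ β)(A) = μ(β A)`. -/
noncomputable def SM.scale (μ : SM) (β : ℝ) : SM :=
  ⟨Measure.map (fun y => y / β) μ.pos, Measure.map (fun y => y / β) μ.neg⟩

/-- `μ` is a Gordon measure. -/
def IsGordon (μ : SM) : Prop :=
  μ.LocFin ∧ UnifLocBounded μ.tv ∧
  ∃ (μs : ℕ → SM) (p : ℕ → ℝ),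
    (∀ m, 0 < p m) ∧ (∀ m, (μs m).LocFin) ∧ (∀ m, (μs m).IsPeriodic (p m)) ∧
    (∀ m, UnifLocBounded (μs m).tv) ∧
    (∃ M : ℝ≥0∞, M < ⊤ ∧ ∀ m, normLoc (μs m).tv ≤ M) ∧
    Filter.Tendsto p Filter.atTop Filter.atTop ∧
    ∀ C : ℝ, Filter.Tendsto
      (fun m => Real.exp (C * p m) * ((tvDiff μ (μs m)) (Set.Icc (-(p m)) (2 * p m))).toReal)
      Filter.atTop (nhds 0)


section Aux

lemma tail_top {g : ℝ → ℝ} (hg : Integrable g volume) (h0 : ∀ t, 0 ≤ g t) :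
    Tendsto (fun a => ∫ t in Icc a (a+1), g t) atTop (nhds 0) := by
  have hN : Tendsto (fun n : ℕ => ∫ t in Ici (n:ℝ), g t) atTop (nhds 0) := by
    have h := Antitone.tendsto_setIntegral (s := fun n : ℕ => Ici (n:ℝ))
      (fun i => measurableSet_Ici)
      (fun m n hmn => Ici_subset_Ici.2 (by exact_mod_cast hmn))
      hg.integrableOn
    have he : ⋂ n : ℕ, Ici ((n:ℝ)) = ∅ := by
      ext x
      simp only [mem_iInter, mem_Ici, mem_empty_iff_false, iff_false, not_forall, not_le]
      obtain ⟨n, hn⟩ := exists_nat_gt x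
      exact ⟨n, hn⟩
    rwa [he, setIntegral_empty] at h
  have hfloor : Tendsto (fun a : ℝ => ∫ t in Ici ((⌊a⌋₊ : ℕ) : ℝ), g t) atTop (nhds 0) :=
    hN.comp tendsto_nat_floor_atTop
  refine squeeze_zero' (Eventually.of_forall fun a => setIntegral_nonneg measurableSet_Icc
    fun t _ => h0 t) ?_ hfloor
  filter_upwards [eventually_ge_atTop (0:ℝ)] with a ha
  refine setIntegral_mono_set hg.integrableOn (Eventually.of_forall fun t => h0 t)
    (Eventually.of_forall ?_)
  intro t ht
  exact le_trans (le_trans (Nat.floor_le ha) ht.1) (le_refl t) |>.trans (le_refl t) |> fun h => h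


lemma tail_bot {g : ℝ → ℝ} (hg : Integrable g volume) (h0 : ∀ t, 0 ≤ g t) :
    Tendsto (fun a => ∫ t in Icc a (a+1), g t) atBot (nhds 0) := by
  have hN : Tendsto (fun n : ℕ => ∫ t in Iic (-(n:ℝ)), g t) atTop (nhds 0) := by
    have h := Antitone.tendsto_setIntegral (s := fun n : ℕ => Iic (-(n:ℝ)))
      (fun i => measurableSet_Iic)
      (fun m n hmn => Iic_subset_Iic.2 (by
        have : (m:ℝ) ≤ (n:ℝ) := by exact_mod_cast hmn
        linarith))
      hg.integrableOn
    have he : ⋂ n : ℕ, Iic (-(n:ℝ)) = ∅ := by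
      ext x
      simp only [mem_iInter, mem_Iic, mem_empty_iff_false, iff_false, not_forall, not_le]
      obtain ⟨n, hn⟩ := exists_nat_gt (-x)
      exact ⟨n, by linarith⟩
    rwa [he, setIntegral_empty] at h
  have hneg : Tendsto (fun a : ℝ => -(a+1)) atBot atTop := by
    have h1 : Tendsto (fun a : ℝ => a + 1) atBot atBot :=
      tendsto_atBot_add_const_right atBot 1 tendsto_id
    have h2 : Tendsto (fun b : ℝ => -b) atBot atTop := tendsto_neg_atBot_atTop
    exact h2.comp h1
  have hfloor : Tendsto (fun a : ℝ => ∫ t in Iic (-((⌊-(a+1)⌋₊ : ℕ) : ℝ)), g t) atBot (nhds 0) :=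
    hN.comp (tendsto_nat_floor_atTop.comp hneg)
  refine squeeze_zero' (Eventually.of_forall fun a => setIntegral_nonneg measurableSet_Icc
    fun t _ => h0 t) ?_ hfloor
  filter_upwards [eventually_le_atBot (-1:ℝ)] with a ha
  refine setIntegral_mono_set hg.integrableOn (Eventually.of_forall fun t => h0 t)
    (Eventually.of_forall ?_)
  intro t ht
  have h1 : (0:ℝ) ≤ -(a+1) := by linarith
  have h2 : ((⌊-(a+1)⌋₊ : ℕ) : ℝ) ≤ -(a+1) := Nat.floor_le h1
  have : t ≤ a + 1 := ht.2
  show t ≤ -((⌊-(a+1)⌋₊ : ℕ) : ℝ)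
  linarith

lemma exists_small' {f : ℝ → ℝ} {a ε : ℝ}
    (hf : IntegrableOn f (Icc a (a+1)) volume)
    (h0 : ∀ t, 0 ≤ f t) (hε : (∫ t in Icc a (a+1), f t) < ε) :
    ∃ y ∈ Icc a (a+1), f y < ε := by
  by_contra h
  push_neg at h
  have h1 : (volume (Icc a (a+1))).toReal = 1 := by
    rw [Real.volume_Icc]; norm_num
  have := setIntegral_ge_of_const_le measurableSet_Icc
    (by rw [Real.volume_Icc]; exact ENNReal.ofReal_ne_top) h hf
  rw [measureReal_def, h1, one_smul] at this
  linarith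

lemma helper_tendsto (l : Filter ℝ) (w : ℝ → ℝ)
    (hw2 : Integrable (fun t => w t ^ 2) volume)
    (hS : Tendsto (fun a => ∫ t in Icc a (a+1), w t ^ 2) l (nhds 0))
    (hosc : ∀ ε > 0, ∀ᶠ a in l, ∀ x ∈ Icc a (a+1), ∀ y ∈ Icc a (a+1), |w y - w x| ≤ ε) :
    Tendsto w l (nhds 0) := by
  rw [NormedAddCommGroup.tendsto_nhds_zero]
  intro ε hε
  have hε2 : (0:ℝ) < ε / 3 := by linarith
  have hS' : ∀ᶠ a in l, (∫ t in Icc a (a+1), w t ^ 2) < (ε/3)^2 :=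
    hS.eventually (eventually_lt_nhds (by positivity) |>.mono fun x h => h)
  filter_upwards [hS', hosc (ε/3) hε2] with a ha hosca
  obtain ⟨y, hy, hwy⟩ := exists_small' (hw2.integrableOn) (fun t => sq_nonneg _) ha
  have hwy' : |w y| < ε / 3 := by
    by_contra hc
    push_neg at hc
    have := sq_abs (w y)
    nlinarith
  have hax : a ∈ Icc a (a+1) := ⟨le_rfl, by linarith⟩
  have := hosca y hy a hax
  calc ‖w a‖ = |w a - w y + w y| := by norm_num
    _ ≤ |w a - w y| + |w y| := abs_add_le _ _
    _ < ε/3 + ε/3 := by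
        have := hosca y hy a hax
        exact add_lt_add_of_le_of_lt this hwy'
    _ < ε := by linarith


lemma meas_add_sub_comm {α : Type*} [MeasurableSpace α] (a b : Measure α)
    [IsFiniteMeasure a] [IsFiniteMeasure b] : a + (b - a) = b + (a - b) := by
  obtain ⟨s, hs, h1, h2⟩ := hahn_decomposition (μ := a) (ν := b)
  have hba : b.restrict s ≤ a.restrict s := by
    refine Measure.le_iff.2 fun t ht => ?_
    rw [Measure.restrict_apply ht, Measure.restrict_apply ht]
    exact h1 _ (ht.inter hs) inter_subset_right
  have hab : a.restrict sᶜ ≤ b.restrict sᶜ := by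
    refine Measure.le_iff.2 fun t ht => ?_
    rw [Measure.restrict_apply ht, Measure.restrict_apply ht]
    exact h2 _ (ht.inter hs.compl) inter_subset_right
  have hbma : b - a = b.restrict sᶜ - a.restrict sᶜ := by
    conv_lhs => rw [← Measure.restrict_add_restrict_compl (μ := b - a) hs]
    rw [Measure.restrict_sub_eq_restrict_sub_restrict hs,
      Measure.restrict_sub_eq_restrict_sub_restrict hs.compl,
      Measure.sub_eq_zero_of_le hba, zero_add]
  have hamb : a - b = a.restrict s - b.restrict s := by
    conv_lhs => rw [← Measure.restrict_add_restrict_compl (μ := a - b) hs]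
    rw [Measure.restrict_sub_eq_restrict_sub_restrict hs,
      Measure.restrict_sub_eq_restrict_sub_restrict hs.compl,
      Measure.sub_eq_zero_of_le hab, add_zero]
  rw [hbma, hamb]
  set as := a.restrict s with has
  set ac := a.restrict sᶜ with hac
  set bs := b.restrict s with hbs
  set bc := b.restrict sᶜ with hbc
  have ea : a = as + ac := (Measure.restrict_add_restrict_compl hs).symm
  have eb : b = bs + bc := (Measure.restrict_add_restrict_compl hs).symm
  rw [ea, eb]
  have e1 : as + ac + (bc - ac) = as + bc := by
    rw [add_assoc, add_comm ac, Measure.sub_add_cancel_of_le hab]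
  have e2 : bs + bc + (as - bs) = as + bc := by
    rw [add_comm bs, add_assoc, add_comm bs, Measure.sub_add_cancel_of_le hba,
      add_comm bc]
  rw [e1, e2]

lemma integral_sub_meas_bound {α : Type*} [MeasurableSpace α] (a b : Measure α)
    [IsFiniteMeasure a] [IsFiniteMeasure b] {f : α → ℝ} {M : ℝ}
    (hfa : Integrable f a) (hfb : Integrable f b)
    (hMa : ∀ᵐ t ∂a, |f t| ≤ M) (hMb : ∀ᵐ t ∂b, |f t| ≤ M) :
    |(∫ t, f t ∂a) - ∫ t, f t ∂b| ≤ M * ((a - b) Set.univ + (b - a) Set.univ).toReal := by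
  have hfab : Integrable f (a - b) := hfa.mono_measure Measure.sub_le
  have hfba : Integrable f (b - a) := hfb.mono_measure Measure.sub_le
  have key : (∫ t, f t ∂a) + ∫ t, f t ∂(b - a) = (∫ t, f t ∂b) + ∫ t, f t ∂(a - b) := by
    rw [← integral_add_measure hfa hfba, ← integral_add_measure hfb hfab,
      meas_add_sub_comm a b]
  have hMab : ∀ᵐ t ∂(a - b), ‖f t‖ ≤ M := ae_mono Measure.sub_le hMa
  have hMba : ∀ᵐ t ∂(b - a), ‖f t‖ ≤ M := ae_mono Measure.sub_le hMb
  have b1 : ‖∫ t, f t ∂(a - b)‖ ≤ M * ((a - b) Set.univ).toReal :=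
    norm_integral_le_of_norm_le_const hMab
  have b2 : ‖∫ t, f t ∂(b - a)‖ ≤ M * ((b - a) Set.univ).toReal :=
    norm_integral_le_of_norm_le_const hMba
  have heq : (∫ t, f t ∂a) - ∫ t, f t ∂b = (∫ t, f t ∂(a - b)) - ∫ t, f t ∂(b - a) := by
    linarith
  rw [heq, ENNReal.toReal_add (measure_ne_top _ _) (measure_ne_top _ _), mul_add]
  calc |(∫ t, f t ∂(a - b)) - ∫ t, f t ∂(b - a)|
      ≤ ‖∫ t, f t ∂(a - b)‖ + ‖∫ t, f t ∂(b - a)‖ := abs_sub _ _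
    _ ≤ M * ((a - b) Set.univ).toReal + M * ((b - a) Set.univ).toReal := add_le_add b1 b2

lemma integOn_bound (μ : SM) (hloc : μ.LocFin)
    {f : ℝ → ℝ} (hf : Continuous f) {x y : ℝ} {M : ℝ}
    (hM : ∀ t ∈ Set.Ioc x y, |f t| ≤ M) :
    |μ.integOn f (Set.Ioc x y)| ≤ M * (μ.tv (Set.Ioc x y)).toReal := by
  haveI := hloc.1
  haveI := hloc.2
  set s : Set ℝ := Set.Ioc x y with hsdef
  haveI ha : IsFiniteMeasure (μ.pos.restrict s) := ⟨by
    rw [Measure.restrict_apply_univ]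
    exact lt_of_le_of_lt (measure_mono Set.Ioc_subset_Icc_self)
      (isCompact_Icc.measure_lt_top)⟩
  haveI hb : IsFiniteMeasure (μ.neg.restrict s) := ⟨by
    rw [Measure.restrict_apply_univ]
    exact lt_of_le_of_lt (measure_mono Set.Ioc_subset_Icc_self)
      (isCompact_Icc.measure_lt_top)⟩
  have hfa : Integrable f (μ.pos.restrict s) :=
    ((hf.continuousOn.integrableOn_compact isCompact_Icc).mono_set
      Set.Ioc_subset_Icc_self : IntegrableOn f s μ.pos)
  have hfb : Integrable f (μ.neg.restrict s) :=
    ((hf.continuousOn.integrableOn_compact isCompact_Icc).mono_set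
      Set.Ioc_subset_Icc_self : IntegrableOn f s μ.neg)
  have hMa : ∀ᵐ t ∂(μ.pos.restrict s), |f t| ≤ M :=
    (ae_restrict_mem measurableSet_Ioc).mono fun t ht => hM t ht
  have hMb : ∀ᵐ t ∂(μ.neg.restrict s), |f t| ≤ M :=
    (ae_restrict_mem measurableSet_Ioc).mono fun t ht => hM t ht
  have key := integral_sub_meas_bound (μ.pos.restrict s) (μ.neg.restrict s) hfa hfb hMa hMb
  have e1 : (μ.pos.restrict s - μ.neg.restrict s) Set.univ = (μ.pos - μ.neg) s := by
    rw [← Measure.restrict_sub_eq_restrict_sub_restrict measurableSet_Ioc,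
      Measure.restrict_apply_univ]
  have e2 : (μ.neg.restrict s - μ.pos.restrict s) Set.univ = (μ.neg - μ.pos) s := by
    rw [← Measure.restrict_sub_eq_restrict_sub_restrict measurableSet_Ioc,
      Measure.restrict_apply_univ]
  have e3 : μ.tv s = (μ.pos - μ.neg) s + (μ.neg - μ.pos) s := by
    simp [SM.tv, tvSub, Measure.add_apply]
  rw [e1, e2] at key
  rw [SM.integOn, e3]
  exact key


lemma setint_split_pos (m : Measure ℝ) [IsLocallyFiniteMeasure m] {u : ℝ → ℝ}
    (hu : Continuous u) {x y : ℝ} (h0 : 0 ≤ x) (hxy : x ≤ y) :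
    ∫ t in Set.Icc 0 y, u t ∂m = (∫ t in Set.Icc 0 x, u t ∂m) + ∫ t in Set.Ioc x y, u t ∂m := by
  rw [← Set.Icc_union_Ioc_eq_Icc h0 hxy]
  exact setIntegral_union ((Set.Iic_disjoint_Ioc le_rfl).mono Set.Icc_subset_Iic_self le_rfl) measurableSet_Ioc
    (hu.continuousOn.integrableOn_compact isCompact_Icc)
    ((hu.continuousOn.integrableOn_compact isCompact_Icc).mono_set Set.Ioc_subset_Icc_self)

lemma setint_split_neg (m : Measure ℝ) [IsLocallyFiniteMeasure m] {u : ℝ → ℝ}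
    (hu : Continuous u) {x y : ℝ} (hxy : x ≤ y) (hy0 : y < 0) :
    ∫ t in Set.Ioo x 0, u t ∂m = (∫ t in Set.Ioc x y, u t ∂m) + ∫ t in Set.Ioo y 0, u t ∂m := by
  rw [← Set.Ioc_union_Ioo_eq_Ioo hxy hy0]
  refine setIntegral_union ?_ measurableSet_Ioo
    ((hu.continuousOn.integrableOn_compact isCompact_Icc).mono_set Set.Ioc_subset_Icc_self)
    (((hu.continuousOn.integrableOn_compact isCompact_Icc).mono_set Set.Ioo_subset_Icc_self) :
      IntegrableOn u (Set.Ioo y 0) m)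
  rw [Set.disjoint_left]
  intro t ht ht'
  exact absurd ht'.1 (not_lt.2 ht.2)

lemma vdiff (μ : SM) (hloc : μ.LocFin) (E : ℝ) (u v : ℝ → ℝ) (hs : IsSolution μ E u v)
    (hu_cont : Continuous u) {x y : ℝ} (hxy : x ≤ y) (hside : 0 ≤ x ∨ y < 0) :
    v y - v x = μ.integOn u (Set.Ioc x y) - E * ∫ t in x..y, u t := by
  haveI := hloc.1
  haveI := hloc.2
  have hiu : ∀ p q : ℝ, IntervalIntegrable u volume p q := fun p q =>
    hu_cont.intervalIntegrable p q
  have hE : (∫ t in (0:ℝ)..y, u t) - ∫ t in (0:ℝ)..x, u t = ∫ t in x..y, u t :=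
    intervalIntegral.integral_interval_sub_left (hiu 0 y) (hiu 0 x)
  have hIR : intRight μ u y - intRight μ u x = μ.integOn u (Set.Ioc x y) := by
    rcases hside with h0 | h0
    · rw [intRight, intRight, if_pos (h0.trans hxy), if_pos h0]
      rw [SM.integOn, SM.integOn, SM.integOn,
        setint_split_pos μ.pos hu_cont h0 hxy, setint_split_pos μ.neg hu_cont h0 hxy]
      ring
    · have hx0 : ¬ (0:ℝ) ≤ x := not_le.2 (lt_of_le_of_lt hxy h0)
      rw [intRight, intRight, if_neg (not_le.2 h0), if_neg hx0]
      rw [SM.integOn, SM.integOn, SM.integOn,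
        setint_split_neg μ.pos hu_cont hxy h0, setint_split_neg μ.neg hu_cont hxy h0]
      ring
  rw [hs.v_eq y, hs.v_eq x]
  calc (v 0 + intRight μ u y - E * ∫ t in (0:ℝ)..y, u t) -
        (v 0 + intRight μ u x - E * ∫ t in (0:ℝ)..x, u t)
      = (intRight μ u y - intRight μ u x) -
        E * ((∫ t in (0:ℝ)..y, u t) - ∫ t in (0:ℝ)..x, u t) := by ring
    _ = μ.integOn u (Set.Ioc x y) - E * ∫ t in x..y, u t := by rw [hIR, hE]

end Aux

/-- If `μ` is a uniformly locally bounded signed Borel measure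
and `(u,v)` is a solution of `-u'' + uμ = Eu` with `u, v ∈ L²(ℝ)`, then
`u(x) → 0` and `v(x) → 0` as `|x| → ∞`. -/
theorem solution_tendsto_zero (μ : SM) (hloc : μ.LocFin)
    (hub : UnifLocBounded μ.tv) (E : ℝ) (u v : ℝ → ℝ)
    (hs : IsSolution μ E u v)
    (hu : MemLp u 2 volume) (hv : MemLp v 2 volume) :
    Tendsto u (Filter.cocompact ℝ) (nhds 0) ∧
      Tendsto v (Filter.cocompact ℝ) (nhds 0) := by
  haveI := hloc.1
  haveI := hloc.2
  have hvint : ∀ a b : ℝ, IntervalIntegrable v volume a b := fun a b =>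
    (hs.locInt.integrableOn_isCompact isCompact_uIcc).intervalIntegrable
  have hu_cont : Continuous u := by
    have h : (fun x => u 0 + ∫ t in (0:ℝ)..x, v t) = u := funext fun x => (hs.u_eq x).symm
    rw [← h]
    exact continuous_const.add (intervalIntegral.continuous_primitive hvint 0)
  have hu2 : Integrable (fun t => u t ^ 2) volume := hu.integrable_sq
  have hv2 : Integrable (fun t => v t ^ 2) volume := hv.integrable_sq
  -- oscillation bound for u on unit intervals
  have hosc_u : ∀ l : Filter ℝ,
      Tendsto (fun a => ∫ t in Icc a (a+1), v t ^ 2) l (nhds 0) →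
      ∀ ε > 0, ∀ᶠ a in l, ∀ x ∈ Icc a (a+1), ∀ y ∈ Icc a (a+1), |u y - u x| ≤ ε := by
    intro l hSv ε hε
    filter_upwards [hSv.eventually
      (eventually_lt_nhds (show (0:ℝ) < ε^2/2 by positivity))] with a hSa
    have key : ∀ x ∈ Icc a (a+1), ∀ y ∈ Icc a (a+1), x ≤ y → |u y - u x| ≤ ε := by
      intro x hx y hy hxy
      have h1 : u y - u x = ∫ t in x..y, v t := by
        rw [hs.u_eq y, hs.u_eq x]
        have := intervalIntegral.integral_interval_sub_left (hvint 0 y) (hvint 0 x)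
        linarith
      have hIvxy : IntegrableOn (fun t => |v t|) (Set.Ioc x y) volume := ((hvint x y).abs).1
      have hg_int : IntegrableOn (fun t => ε/4 + v t ^ 2 / ε) (Icc a (a+1)) volume := by
        refine (integrableOn_const ?_).add (hv2.integrableOn.div_const ε)
        rw [Real.volume_Icc]; exact ENNReal.ofReal_ne_top
      have h2 : |∫ t in x..y, v t| ≤ ∫ t in Set.Ioc x y, |v t| := by
        rw [intervalIntegral.integral_of_le hxy]
        simpa [Real.norm_eq_abs] using
          norm_integral_le_integral_norm (μ := volume.restrict (Set.Ioc x y)) v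
      have h3 : (∫ t in Set.Ioc x y, |v t|) ≤ ∫ t in Set.Ioc x y, (ε/4 + v t ^ 2 / ε) := by
        refine setIntegral_mono_on hIvxy (hg_int.mono_set ?_) measurableSet_Ioc ?_
        · intro t ht
          exact ⟨le_trans hx.1 (le_of_lt ht.1), le_trans ht.2 hy.2⟩
        · intro t _
          have hz : (v t)^2 = |v t|^2 := (sq_abs (v t)).symm
          rw [← sub_nonneg]
          have e : ε/4 + (v t)^2/ε - |v t| = (2*|v t| - ε)^2/(4*ε) := by
            field_simp
            linarith [sq_abs (v t)]
          rw [e]; positivity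
      have h4 : (∫ t in Set.Ioc x y, (ε/4 + v t ^ 2 / ε)) ≤
          ∫ t in Icc a (a+1), (ε/4 + v t ^ 2 / ε) := by
        refine setIntegral_mono_set hg_int (Eventually.of_forall fun t => by positivity)
          (Eventually.of_forall ?_)
        intro t ht
        exact ⟨le_trans hx.1 (le_of_lt ht.1), le_trans ht.2 hy.2⟩
      have h5 : (∫ t in Icc a (a+1), (ε/4 + v t ^ 2 / ε)) =
          ε/4 + (∫ t in Icc a (a+1), v t ^ 2) / ε := by
        rw [integral_add ((integrableOn_const (by
          rw [Real.volume_Icc]; exact ENNReal.ofReal_ne_top)) : IntegrableOn (fun _ : ℝ => ε/4) (Icc a (a+1)) volume)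
          (hv2.integrableOn.div_const ε), setIntegral_const, integral_div]
        have : (volume (Icc a (a+1))).toReal = 1 := by rw [Real.volume_Icc]; norm_num
        rw [measureReal_def, this]; simp
      have h6 : (∫ t in Icc a (a+1), v t ^ 2) / ε < ε/2 := by
        rw [div_lt_iff₀ hε]
        nlinarith
      rw [h1]
      calc |∫ t in x..y, v t| ≤ ∫ t in Set.Ioc x y, |v t| := h2
        _ ≤ ∫ t in Set.Ioc x y, (ε/4 + v t ^ 2 / ε) := h3
        _ ≤ ∫ t in Icc a (a+1), (ε/4 + v t ^ 2 / ε) := h4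
        _ = ε/4 + (∫ t in Icc a (a+1), v t ^ 2) / ε := h5
        _ ≤ ε/4 + ε/2 := by linarith
        _ ≤ ε := by linarith
    intro x hx y hy
    rcases le_total x y with hxy | hxy
    · exact key x hx y hy hxy
    · rw [abs_sub_comm]
      exact key y hy x hx hxy
  have hu_top : Tendsto u atTop (nhds 0) :=
    helper_tendsto atTop u hu2 (tail_top hu2 fun t => sq_nonneg _)
      (hosc_u atTop (tail_top hv2 fun t => sq_nonneg _))
  have hu_bot : Tendsto u atBot (nhds 0) :=
    helper_tendsto atBot u hu2 (tail_bot hu2 fun t => sq_nonneg _)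
      (hosc_u atBot (tail_bot hv2 fun t => sq_nonneg _))
  -- oscillation bound for v on unit intervals
  have hosc_v : ∀ l : Filter ℝ,
      (∀ δ > (0:ℝ), ∀ᶠ a in l, ∀ t ∈ Icc a (a+1), |u t| ≤ δ) →
      (∀ᶠ a in l, (0:ℝ) ≤ a ∨ a + 1 < 0) →
      ∀ ε > 0, ∀ᶠ a in l, ∀ x ∈ Icc a (a+1), ∀ y ∈ Icc a (a+1), |v y - v x| ≤ ε := by
    intro l husmall hside ε hε
    set N := (normLoc μ.tv).toReal with hN
    have hN0 : 0 ≤ N := ENNReal.toReal_nonneg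
    set δ := ε / (N + |E| + 1) with hδdef
    have hδ : 0 < δ := div_pos hε (by positivity)
    filter_upwards [husmall δ hδ, hside] with a hua hsa
    have key : ∀ x ∈ Icc a (a+1), ∀ y ∈ Icc a (a+1), x ≤ y → |v y - v x| ≤ ε := by
      intro x hx y hy hxy
      have hside' : 0 ≤ x ∨ y < 0 := by
        rcases hsa with h | h
        · exact Or.inl (le_trans h hx.1)
        · exact Or.inr (lt_of_le_of_lt hy.2 h)
      rw [vdiff μ hloc E u v hs hu_cont hxy hside']
      have hb1 : |μ.integOn u (Set.Ioc x y)| ≤ δ * (μ.tv (Set.Ioc x y)).toReal := by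
        refine integOn_bound μ hloc hu_cont ?_
        intro t ht
        exact hua t ⟨le_trans hx.1 (le_of_lt ht.1), le_trans ht.2 hy.2⟩
      have htv : (μ.tv (Set.Ioc x y)).toReal ≤ N := by
        refine ENNReal.toReal_mono (ne_of_lt hub) ?_
        refine le_trans (measure_mono ?_) (le_iSup (fun z => μ.tv (Icc z (z+1))) a)
        intro t ht
        exact ⟨le_trans hx.1 (le_of_lt ht.1), le_trans ht.2 hy.2⟩
      have hb2 : |E * ∫ t in x..y, u t| ≤ |E| * δ := by
        rw [abs_mul]
        refine mul_le_mul_of_nonneg_left ?_ (abs_nonneg E)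
        have := intervalIntegral.norm_integral_le_of_norm_le_const
          (f := u) (a := x) (b := y) (C := δ) ?_
        · calc |∫ t in x..y, u t| ≤ δ * |y - x| := this
            _ ≤ δ * 1 := by
                refine mul_le_mul_of_nonneg_left ?_ (le_of_lt hδ)
                rw [abs_of_nonneg (by linarith)]
                have := hx.1; have := hy.2; linarith
            _ = δ := mul_one δ
        · intro t ht
          rw [Set.uIoc_of_le hxy] at ht
          exact hua t ⟨le_trans hx.1 (le_of_lt ht.1), le_trans ht.2 hy.2⟩
      calc |μ.integOn u (Set.Ioc x y) - E * ∫ t in x..y, u t|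
          ≤ |μ.integOn u (Set.Ioc x y)| + |E * ∫ t in x..y, u t| := abs_sub _ _
        _ ≤ δ * N + |E| * δ := by
            refine add_le_add (le_trans hb1 ?_) hb2
            exact mul_le_mul_of_nonneg_left htv (le_of_lt hδ)
        _ = δ * (N + |E|) := by ring
        _ ≤ δ * (N + |E| + 1) := by nlinarith
        _ = ε := by
            rw [hδdef]
            field_simp
    intro x hx y hy
    rcases le_total x y with hxy | hxy
    · exact key x hx y hy hxy
    · rw [abs_sub_comm]
      exact key y hy x hx hxy
  have husmall_top : ∀ δ > (0:ℝ), ∀ᶠ a in atTop, ∀ t ∈ Icc a (a+1), |u t| ≤ δ := by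
    intro δ hδ
    have := (NormedAddCommGroup.tendsto_nhds_zero.mp hu_top) δ hδ
    rw [eventually_atTop] at this ⊢
    obtain ⟨X, hX⟩ := this
    exact ⟨X, fun a ha t ht => (hX t (le_trans ha ht.1)).le⟩
  have husmall_bot : ∀ δ > (0:ℝ), ∀ᶠ a in atBot, ∀ t ∈ Icc a (a+1), |u t| ≤ δ := by
    intro δ hδ
    have := (NormedAddCommGroup.tendsto_nhds_zero.mp hu_bot) δ hδ
    rw [eventually_atBot] at this ⊢
    obtain ⟨X, hX⟩ := this
    refine ⟨X - 1, fun a ha t ht => (hX t ?_).le⟩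
    have := ht.2
    linarith
  have hv_top : Tendsto v atTop (nhds 0) :=
    helper_tendsto atTop v hv2 (tail_top hv2 fun t => sq_nonneg _)
      (hosc_v atTop husmall_top ((eventually_ge_atTop (0:ℝ)).mono fun a ha => Or.inl ha))
  have hv_bot : Tendsto v atBot (nhds 0) :=
    helper_tendsto atBot v hv2 (tail_bot hv2 fun t => sq_nonneg _)
      (hosc_v atBot husmall_bot ((eventually_le_atBot (-2:ℝ)).mono fun a ha =>
        Or.inr (by linarith)))
  constructor
  · rw [cocompact_eq_atBot_atTop]
    exact tendsto_sup.2 ⟨hu_bot, hu_top⟩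
  · rw [cocompact_eq_atBot_atTop]
    exact tendsto_sup.2 ⟨hv_bot, hv_top⟩
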